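/- Let U be a free (nonprincipal) ultrafilter on ℕ and let (μ_n)_{n∈ℕ} be Borel probability measures on ℝ such that for every bounded continuous f : ℝ → ℝ and every L ∈ ℝ, if the sequence k ↦ f(k) tends to L along U then ∫ f dμ_n → L as n → ∞. Then for every E ⊆ ℕ, the sequence μ_n(E) (with E viewed as a subset of ℝ) converges to 1 if E ∈ U and converges to 0 if E ∉ U. -/

import Mathlib

open MeasureTheory Filter Topology Metric
open scoped ENNReal NNReal

private lemma int_of_bdd (μ : Measure ℝ) [IsProbabilityMeasure μ] {f : ℝ → ℝ}
    (hf : Continuous f) (h0 : ∀ x, 0 ≤ f x) (h1 : ∀ x, f x ≤ 1) : Integrable f μ := by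
  refine (integrable_const (1 : ℝ)).mono' hf.aestronglyMeasurable ?_
  filter_upwards with x
  rw [Real.norm_eq_abs, abs_of_nonneg (h0 x)]
  exact h1 x

private lemma meas_le_int (μ : Measure ℝ) [IsProbabilityMeasure μ] {f : ℝ → ℝ}
    (hf : Continuous f) (h0 : ∀ x, 0 ≤ f x) (h1 : ∀ x, f x ≤ 1)
    {S : Set ℝ} (hS : MeasurableSet S) (hSf : ∀ x ∈ S, 1 ≤ f x) :
    (μ S).toReal ≤ ∫ x, f x ∂μ := by
  rw [← measureReal_def, ← MeasureTheory.integral_indicator_one hS]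
  refine integral_mono ((integrable_const (1 : ℝ)).indicator hS) (int_of_bdd μ hf h0 h1) ?_
  intro x
  by_cases hx : x ∈ S
  · simpa [Set.indicator_of_mem hx] using hSf x hx
  · simpa [Set.indicator_of_notMem hx] using h0 x

private lemma habs_nat (k j : ℕ) (hkj : k ≠ j) : (1 : ℝ) ≤ |(k : ℝ) - (j : ℝ)| := by
  rcases lt_or_gt_of_ne hkj with h | h
  · have : (k : ℝ) + 1 ≤ j := by exact_mod_cast Nat.succ_le_of_lt h
    rw [abs_sub_comm]
    calc (1 : ℝ) ≤ (j : ℝ) - k := by linarith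
    _ ≤ |(j : ℝ) - k| := le_abs_self _
  · have : (j : ℝ) + 1 ≤ k := by exact_mod_cast Nat.succ_le_of_lt h
    calc (1 : ℝ) ≤ (k : ℝ) - j := by linarith
    _ ≤ |(k : ℝ) - j| := le_abs_self _

/-- third intermediate claim in Example 5.11: if the Borel probability
measures `μ n` on `ℝ` converge weakly (against bounded continuous functions) to the charge
determined by the free ultrafilter `U`, then for every `E ⊆ ℕ` the sequence `μ n E`
converges to `1` if `E ∈ U` and to `0` if `E ∉ U`. -/
theorem tendsto_measure_subsets_nat_of_weak_limit_ultrafilter_charge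
    (U : Ultrafilter ℕ) (hU : (U : Filter ℕ) ≤ Filter.cofinite)
    (μ : ℕ → Measure ℝ) (hprob : ∀ n, IsProbabilityMeasure (μ n))
    (hconv : ∀ f : ℝ → ℝ, Continuous f → (∃ C : ℝ, ∀ x, |f x| ≤ C) →
      ∀ L : ℝ, Tendsto (fun k : ℕ => f k) (U : Filter ℕ) (𝓝 L) →
        Tendsto (fun n => ∫ x, f x ∂(μ n)) atTop (𝓝 L)) :
    ∀ E : Set ℕ,
      (E ∈ U → Tendsto (fun n => μ n (((↑) : ℕ → ℝ) '' E)) atTop (𝓝 1)) ∧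
      (E ∉ U → Tendsto (fun n => μ n (((↑) : ℕ → ℝ) '' E)) atTop (𝓝 0)) := by
  classical
  set NR : Set ℝ := Set.range (Nat.cast : ℕ → ℝ) with hNRdef
  have hNRclosed : IsClosed NR := Nat.isClosedEmbedding_coe_real.isClosed_range
  have hNRne : NR.Nonempty := ⟨(0 : ℝ), ⟨0, by norm_num⟩⟩
  have hNRmeas : MeasurableSet NR := (Set.countable_range _).measurableSet
  -- integrals of nonneg bounded continuous functions vanishing on a `U`-large set tend to 0
  have hzero : ∀ f : ℝ → ℝ, Continuous f → (∀ x, 0 ≤ f x) → (∀ x, f x ≤ 1) →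
      {k : ℕ | f k = 0} ∈ U → Tendsto (fun n => ∫ x, f x ∂(μ n)) atTop (𝓝 0) := by
    intro f hc h0 h1 hmem
    refine hconv f hc ⟨1, fun x => abs_le.2 ⟨by linarith [h0 x], h1 x⟩⟩ 0 ?_
    refine Tendsto.congr' ?_ tendsto_const_nhds
    exact Filter.eventuallyEq_of_mem hmem fun k hk => hk.symm
  -- key squeeze: a measurable set dominated by such a function has vanishing measure
  have key : ∀ (S : Set ℝ) (f : ℝ → ℝ), MeasurableSet S → Continuous f →
      (∀ x, 0 ≤ f x) → (∀ x, f x ≤ 1) → (∀ x ∈ S, 1 ≤ f x) → {k : ℕ | f k = 0} ∈ U →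
      Tendsto (fun n => (μ n S).toReal) atTop (𝓝 0) := by
    intro S f hS hc h0 h1 hSf hmem
    have h2 := hzero f hc h0 h1 hmem
    refine tendsto_of_tendsto_of_tendsto_of_le_of_le tendsto_const_nhds h2
      (fun n => ENNReal.toReal_nonneg) (fun n => ?_)
    haveI := hprob n
    exact meas_le_int (μ n) hc h0 h1 hS hSf
  -- mass below any fixed level goes to 0
  have hA2 : ∀ K : ℕ, Tendsto (fun n => (μ n (Set.Iic (K : ℝ))).toReal) atTop (𝓝 0) := by
    intro K
    refine key _ (fun x => max 0 (min 1 ((K : ℝ) + 1 - x))) measurableSet_Iic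
      (continuous_const.max (continuous_const.min (continuous_const.sub continuous_id)))
      (fun x => le_max_left _ _) (fun x => max_le zero_le_one (min_le_left _ _)) ?_ ?_
    · intro x hx
      have hx' : x ≤ (K : ℝ) := hx
      have h1 : (1 : ℝ) ≤ (K : ℝ) + 1 - x := by linarith
      exact le_max_of_le_right (le_min le_rfl h1)
    · refine hU ?_
      rw [Filter.mem_cofinite]
      refine Set.Finite.subset (Set.finite_Iio (K + 1)) ?_
      intro k hk
      rw [Set.mem_compl_iff, Set.mem_setOf_eq] at hk
      rw [Set.mem_Iio]
      by_contra h
      push_neg at h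
      apply hk
      have h' : ((K : ℝ) + 1 - (k : ℕ)) ≤ 0 := by
        have : ((K : ℕ) : ℝ) + 1 ≤ (k : ℝ) := by exact_mod_cast h
        linarith
      have : min 1 ((K : ℝ) + 1 - (k : ℕ)) ≤ 0 := le_trans (min_le_right _ _) h'
      exact max_eq_left this
  -- easy direction : `E ∉ U` gives vanishing measure
  have hnotU : ∀ E : Set ℕ, E ∉ U →
      Tendsto (fun n => (μ n (((↑) : ℕ → ℝ) '' E)).toReal) atTop (𝓝 0) := by
    intro E hE
    rcases E.eq_empty_or_nonempty with rfl | hEne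
    · simpa [Set.image_empty] using tendsto_const_nhds
        (α := ℝ) (f := atTop (α := ℕ))
    · have hEim : (((↑) : ℕ → ℝ) '' E).Nonempty := hEne.image _
      refine key _ (fun x => max 0 (1 - 2 * infDist x (((↑) : ℕ → ℝ) '' E)))
        ((Set.Countable.image (Set.to_countable E) _).measurableSet)
        (continuous_const.max (continuous_const.sub
          (continuous_const.mul (continuous_infDist_pt _))))
        (fun x => le_max_left _ _) ?_ ?_ ?_
      · intro x
        have h := infDist_nonneg (s := ((↑) : ℕ → ℝ) '' E) (x := x)
        refine max_le zero_le_one (by linarith)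
      · intro x hx
        show (1:ℝ) ≤ max 0 (1 - 2 * infDist x (((↑) : ℕ → ℝ) '' E))
        rw [infDist_zero_of_mem hx]
        norm_num
      · have hcE : Eᶜ ∈ U := Ultrafilter.compl_mem_iff_notMem.2 hE
        refine Filter.mem_of_superset hcE ?_
        intro k hk
        rw [Set.mem_setOf_eq]
        have hd : (1 : ℝ) ≤ infDist (k : ℝ) (((↑) : ℕ → ℝ) '' E) := by
          by_contra h
          push_neg at h
          obtain ⟨y, hy, hdy⟩ := (infDist_lt_iff hEim).1 h
          obtain ⟨j, hj, rfl⟩ := hy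
          have hkj : k ≠ j := fun hkj => hk (hkj ▸ hj)
          rw [Real.dist_eq] at hdy
          exact absurd hdy (not_lt.2 (habs_nat k j hkj))
        have : (1 : ℝ) - 2 * infDist (k : ℝ) (((↑) : ℕ → ℝ) '' E) ≤ 0 := by linarith
        exact max_eq_left this
  -- the hard part: the mass off `ℕ` goes to 0
  have hA : Tendsto (fun n => (μ n NRᶜ).toReal) atTop (𝓝 0) := by
    by_contra hcon
    rw [Metric.tendsto_atTop] at hcon
    push_neg at hcon
    obtain ⟨c, hc, hfreq0⟩ := hcon
    have hfreq : ∀ N, ∃ n ≥ N, c ≤ (μ n NRᶜ).toReal := by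
      intro N
      obtain ⟨n, hn, h⟩ := hfreq0 N
      refine ⟨n, hn, ?_⟩
      rwa [Real.dist_0_eq_abs, abs_of_nonneg ENNReal.toReal_nonneg] at h
    -- one step of the recursive construction
    have hstep : ∀ N K0 : ℕ, ∃ (n K : ℕ) (C : Set ℝ), N < n ∧ K0 < K ∧ IsCompact C ∧
        C ⊆ NRᶜ ∧ C ⊆ Set.Ioo (K0 : ℝ) (K : ℝ) ∧ c / 2 ≤ (μ n C).toReal := by
      intro N K0
      have h4 : (0 : ℝ) < c / 4 := by linarith
      obtain ⟨M, hM⟩ := (Metric.tendsto_atTop.1 (hA2 K0)) (c / 4) h4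
      obtain ⟨n, hn, hcn⟩ := hfreq (max (N + 1) M)
      have hnN : N < n := lt_of_lt_of_le (Nat.lt_succ_self N) (le_trans (le_max_left _ _) hn)
      have hnM : M ≤ n := le_trans (le_max_right _ _) hn
      have hIic : (μ n (Set.Iic (K0 : ℝ))).toReal < c / 4 := by
        have := hM n hnM
        rwa [Real.dist_0_eq_abs, abs_of_nonneg ENNReal.toReal_nonneg] at this
      haveI := hprob n
      set S : Set ℝ := NRᶜ ∩ Set.Ioi (K0 : ℝ) with hSdef
      have hSmeas : MeasurableSet S := hNRmeas.compl.inter measurableSet_Ioi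
      have hsub : NRᶜ ⊆ S ∪ Set.Iic (K0 : ℝ) := by
        intro x hx
        rcases le_or_gt x (K0 : ℝ) with h | h
        · exact Or.inr h
        · exact Or.inl ⟨hx, h⟩
      have hSlb : c - c / 4 ≤ (μ n S).toReal := by
        have h1 : μ n NRᶜ ≤ μ n S + μ n (Set.Iic (K0 : ℝ)) :=
          le_trans (measure_mono hsub) (measure_union_le _ _)
        have h2 : (μ n NRᶜ).toReal ≤ (μ n S).toReal + (μ n (Set.Iic (K0 : ℝ))).toReal := by
          rw [← ENNReal.toReal_add (measure_ne_top _ _) (measure_ne_top _ _)]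
          exact ENNReal.toReal_mono
            (ENNReal.add_ne_top.2 ⟨measure_ne_top _ _, measure_ne_top _ _⟩) h1
        linarith
      haveI : (μ n).InnerRegularCompactLTTop := inferInstance
      obtain ⟨C, hCS, hCcomp, hCμ⟩ := hSmeas.exists_isCompact_lt_add (μ := μ n)
        (measure_ne_top (μ n) S) (ε := ENNReal.ofReal (c / 4))
        (by simp only [ne_eq, ENNReal.ofReal_eq_zero, not_le]; linarith)
      have hClb : c / 2 ≤ (μ n C).toReal := by
        have h1 : (μ n S).toReal ≤ (μ n C).toReal + c / 4 := by
          have h2 := ENNReal.toReal_mono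
            (ENNReal.add_ne_top.2 ⟨measure_ne_top _ _, ENNReal.ofReal_ne_top⟩) hCμ.le
          rwa [ENNReal.toReal_add (measure_ne_top _ _) (by simp), ENNReal.toReal_ofReal h4.le]
            at h2
        linarith
      obtain ⟨r, hr⟩ := hCcomp.isBounded.subset_ball 0
      refine ⟨n, K0 + ⌈r⌉₊ + 1, C, hnN, by omega, hCcomp, fun x hx => (hCS hx).1, ?_, hClb⟩
      intro x hx
      refine ⟨(hCS hx).2, ?_⟩
      have hx1 := hr hx
      rw [Metric.mem_ball, Real.dist_0_eq_abs] at hx1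
      have hx2 : x < r := lt_of_le_of_lt (le_abs_self x) hx1
      have hrK : r ≤ ((K0 + ⌈r⌉₊ + 1 : ℕ) : ℝ) := by
        push_cast
        have h5 := Nat.le_ceil r
        have h6 : (0 : ℝ) ≤ (K0 : ℝ) := Nat.cast_nonneg _
        linarith
      linarith
    choose nf kf cf hn1 hk1 hcomp hsubNR hIoo hlb using hstep
    set T : ℕ → ℕ × ℕ := fun i => Nat.rec (0, 0) (fun _ p => (nf p.1 p.2, kf p.1 p.2)) i with hT
    have hTsucc : ∀ i, T (i + 1) = (nf (T i).1 (T i).2, kf (T i).1 (T i).2) := fun _ => rfl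
    set C : ℕ → Set ℝ := fun i => cf (T i).1 (T i).2 with hCdef
    have hCcompact : ∀ i, IsCompact (C i) := fun i => hcomp _ _
    have hCNR : ∀ i, C i ⊆ NRᶜ := fun i => hsubNR _ _
    have hvmono : StrictMono (fun i => (T i).2) := by
      refine strictMono_nat_of_lt_succ (fun i => ?_)
      rw [hTsucc i]
      exact hk1 _ _
    have humono : StrictMono (fun i => (T i).1) := by
      refine strictMono_nat_of_lt_succ (fun i => ?_)
      rw [hTsucc i]
      exact hn1 _ _
    have hvge : ∀ i, i ≤ (T i).2 := fun i => hvmono.le_apply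
    have hCsub : ∀ i, C i ⊆ Set.Ioo (((T i).2 : ℝ)) (((T (i + 1)).2 : ℝ)) := by
      intro i
      rw [hTsucc i]
      exact hIoo _ _
    have hmeasC : ∀ i, c / 2 ≤ (μ ((T (i + 1)).1) (C i)).toReal := by
      intro i
      rw [hTsucc i]
      exact hlb _ _
    have hCne : (C 0).Nonempty := by
      rw [Set.nonempty_iff_ne_empty]
      intro h
      have h1 := hmeasC 0
      rw [h] at h1
      simp only [measure_empty, ENNReal.toReal_zero] at h1
      linarith
    have hlocfin : LocallyFinite C := by
      intro x
      refine ⟨Set.Iio (x + 1), Iio_mem_nhds (by linarith), ?_⟩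
      refine Set.Finite.subset (Set.finite_Iio (⌈x + 1⌉₊ + 1)) ?_
      intro i hi
      obtain ⟨y, hyC, hyI⟩ := hi
      have h1 : ((T i).2 : ℝ) < y := (hCsub i hyC).1
      have h2 : (i : ℝ) ≤ ((T i).2 : ℝ) := by exact_mod_cast hvge i
      have h3 : (i : ℝ) < x + 1 := lt_of_le_of_lt h2 (lt_trans h1 hyI)
      have h4 : (i : ℝ) ≤ (⌈x + 1⌉₊ : ℝ) := le_trans h3.le (Nat.le_ceil _)
      have h5 : i ≤ ⌈x + 1⌉₊ := by exact_mod_cast h4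
      exact Set.mem_Iio.2 (Nat.lt_succ_of_le h5)
    set Cu : Set ℝ := ⋃ i, C i with hCu
    have hCuclosed : IsClosed Cu := hlocfin.isClosed_iUnion fun i => (hCcompact i).isClosed
    have hCuNR : ∀ x ∈ Cu, x ∉ NR := by
      intro x hx
      obtain ⟨i, hi⟩ := Set.mem_iUnion.1 hx
      exact hCNR i hi
    have hCune : Cu.Nonempty := hCne.mono (Set.subset_iUnion C 0)
    set g : ℝ → ℝ := fun x => infDist x NR / (infDist x NR + infDist x Cu) with hg
    have hden : ∀ x, 0 < infDist x NR + infDist x Cu := by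
      intro x
      rcases (infDist_nonneg (s := NR) (x := x)).lt_or_eq with h | h
      · have := infDist_nonneg (s := Cu) (x := x)
        linarith
      rcases (infDist_nonneg (s := Cu) (x := x)).lt_or_eq with h' | h'
      · linarith
      exfalso
      have hx1 : x ∈ NR := (hNRclosed.mem_iff_infDist_zero hNRne).2 h.symm
      have hx2 : x ∈ Cu := (hCuclosed.mem_iff_infDist_zero hCune).2 h'.symm
      exact hCuNR x hx2 hx1
    have hgcont : Continuous g :=
      (continuous_infDist_pt NR).div
        ((continuous_infDist_pt NR).add (continuous_infDist_pt Cu)) fun x => (hden x).ne'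
    have hg0 : ∀ x, 0 ≤ g x := fun x => div_nonneg infDist_nonneg (hden x).le
    have hg1 : ∀ x, g x ≤ 1 := fun x =>
      (div_le_one (hden x)).2 (le_add_of_nonneg_right infDist_nonneg)
    have hgNat : ∀ k : ℕ, g (k : ℝ) = 0 := by
      intro k
      have : infDist ((k : ℕ) : ℝ) NR = 0 := infDist_zero_of_mem ⟨k, rfl⟩
      simp [hg, this]
    have hgC : ∀ i, ∀ x ∈ C i, 1 ≤ g x := by
      intro i x hx
      have hxCu : x ∈ Cu := Set.mem_iUnion.2 ⟨i, hx⟩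
      have h1 : infDist x Cu = 0 := infDist_zero_of_mem hxCu
      have h2 : 0 < infDist x NR := (hNRclosed.notMem_iff_infDist_pos hNRne).1 (hCNR i hx)
      simp only [hg, h1, add_zero]
      rw [div_self h2.ne']
    have hgint := hzero g hgcont hg0 hg1 (Filter.univ_mem' fun k => hgNat k)
    obtain ⟨M, hM⟩ := (Metric.tendsto_atTop.1 hgint) (c / 2) (by linarith)
    have hni : M ≤ (T (M + 1)).1 := le_trans (Nat.le_succ M) humono.le_apply
    have h1 := hM ((T (M + 1)).1) hni
    rw [Real.dist_0_eq_abs] at h1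
    haveI := hprob ((T (M + 1)).1)
    have h2 : (μ ((T (M + 1)).1) (C M)).toReal ≤ ∫ x, g x ∂(μ ((T (M + 1)).1)) :=
      meas_le_int _ hgcont hg0 hg1 (hCcompact M).isClosed.measurableSet (hgC M)
    have h3 : c / 2 ≤ ∫ x, g x ∂(μ ((T (M + 1)).1)) := le_trans (hmeasC M) h2
    rw [abs_of_nonneg (by linarith)] at h1
    linarith
  -- assemble the two directions
  intro E
  constructor
  · intro hE
    have h1 := hnotU Eᶜ fun h => (Ultrafilter.compl_mem_iff_notMem.1 h) hE
    have hlow : ∀ n, 1 - (μ n (((↑) : ℕ → ℝ) '' Eᶜ)).toReal - (μ n NRᶜ).toReal ≤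
        (μ n (((↑) : ℕ → ℝ) '' E)).toReal := by
      intro n
      haveI := hprob n
      have hcover : (Set.univ : Set ℝ) ⊆
          (((↑) : ℕ → ℝ) '' E) ∪ ((((↑) : ℕ → ℝ) '' Eᶜ) ∪ NRᶜ) := by
        intro x _
        by_cases hx : x ∈ NR
        · obtain ⟨k, rfl⟩ := hx
          by_cases hk : k ∈ E
          · exact Or.inl ⟨k, hk, rfl⟩
          · exact Or.inr (Or.inl ⟨k, hk, rfl⟩)
        · exact Or.inr (Or.inr hx)
      have hm1 : (1 : ℝ≥0∞) ≤ μ n (((↑) : ℕ → ℝ) '' E) +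
          (μ n (((↑) : ℕ → ℝ) '' Eᶜ) + μ n NRᶜ) := by
        calc (1 : ℝ≥0∞) = μ n Set.univ := measure_univ.symm
        _ ≤ μ n ((((↑) : ℕ → ℝ) '' E) ∪ ((((↑) : ℕ → ℝ) '' Eᶜ) ∪ NRᶜ)) :=
          measure_mono hcover
        _ ≤ μ n (((↑) : ℕ → ℝ) '' E) + μ n ((((↑) : ℕ → ℝ) '' Eᶜ) ∪ NRᶜ) :=
          measure_union_le _ _
        _ ≤ _ := add_le_add le_rfl (measure_union_le _ _)
      have hm2 : (1 : ℝ) ≤ (μ n (((↑) : ℕ → ℝ) '' E)).toReal +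
          ((μ n (((↑) : ℕ → ℝ) '' Eᶜ)).toReal + (μ n NRᶜ).toReal) := by
        have h3 := ENNReal.toReal_mono (ENNReal.add_ne_top.2 ⟨measure_ne_top _ _,
          ENNReal.add_ne_top.2 ⟨measure_ne_top _ _, measure_ne_top _ _⟩⟩) hm1
        rwa [ENNReal.toReal_one, ENNReal.toReal_add (measure_ne_top _ _)
          (ENNReal.add_ne_top.2 ⟨measure_ne_top _ _, measure_ne_top _ _⟩),
          ENNReal.toReal_add (measure_ne_top _ _) (measure_ne_top _ _)] at h3
      linarith
    have hupper : ∀ n, (μ n (((↑) : ℕ → ℝ) '' E)).toReal ≤ 1 := by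
      intro n
      haveI := hprob n
      have h4 := ENNReal.toReal_mono ENNReal.one_ne_top (prob_le_one (μ := μ n)
        (s := ((↑) : ℕ → ℝ) '' E))
      rwa [ENNReal.toReal_one] at h4
    have hlowlim : Tendsto (fun n => 1 - (μ n (((↑) : ℕ → ℝ) '' Eᶜ)).toReal -
        (μ n NRᶜ).toReal) atTop (𝓝 1) := by
      have h5 := ((tendsto_const_nhds (x := (1 : ℝ)) (f := atTop (α := ℕ))).sub h1).sub hA
      simpa using h5
    have htR : Tendsto (fun n => (μ n (((↑) : ℕ → ℝ) '' E)).toReal) atTop (𝓝 1) :=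
      tendsto_of_tendsto_of_tendsto_of_le_of_le hlowlim tendsto_const_nhds hlow hupper
    have heq : (fun n => μ n (((↑) : ℕ → ℝ) '' E)) =
        fun n => ENNReal.ofReal ((μ n (((↑) : ℕ → ℝ) '' E)).toReal) := by
      funext n
      haveI := hprob n
      rw [ENNReal.ofReal_toReal (measure_ne_top _ _)]
    rw [heq]
    simpa using ENNReal.tendsto_ofReal htR
  · intro hE
    have h1 := hnotU E hE
    have heq : (fun n => μ n (((↑) : ℕ → ℝ) '' E)) =
        fun n => ENNReal.ofReal ((μ n (((↑) : ℕ → ℝ) '' E)).toReal) := by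
      funext n
      haveI := hprob n
      rw [ENNReal.ofReal_toReal (measure_ne_top _ _)]
    rw [heq]
    simpa using ENNReal.tendsto_ofReal h1
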